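/- arXiv:2009.10824 — 4 statements merged into one kernel-verified Lean document; each statement's English description precedes it below -/
import Mathlib

section
/- For y₁,…,y_q ∈ Y and h₁,…,h_{k−q} ∈ H, writing y = y₁∧⋯∧y_q ∈ ∧^qH, one has (δ−1)(y∧h₁∧⋯∧h_{k−q}) ≡ Σ_{i=1}^{k−q} y∧h₁∧⋯∧(δ−1)hᵢ∧⋯∧h_{k−q} modulo F_{q+2}∧ᵏH. In particular, (δ−1)(F_q∧ᵏH) ⊆ F_{q+1}∧ᵏH for all 0 ≤ q ≤ k. -/
/-- The filtration `F_q ⋀^k H = (⋀^q Y) ∧ (⋀^{k-q} H)`: the span of simple wedges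
`y₁ ∧ ⋯ ∧ y_q ∧ h₁ ∧ ⋯ ∧ h_{k-q}` with the first `q` entries in `Y` (and `0` for `q > k`),
realized inside the exterior algebra. -/
noncomputable def Ffil {H : Type} [AddCommGroup H] [Module ℤ H]
    (Y : Submodule ℤ H) (k q : ℕ) : Submodule ℤ (ExteriorAlgebra ℤ H) :=
  if q ≤ k then
    Submodule.span ℤ {z | ∃ v : Fin k → H,
      (∀ i : Fin k, (i : ℕ) < q → v i ∈ Y) ∧ z = ExteriorAlgebra.ιMulti ℤ k v}
  else ⊥

/-- The map `δ - 1` induced functorially on the exterior algebra; restricted to the `k`-th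
exterior power `⋀[ℤ]^k H` it is the map induced by `δ` on `⋀^k H` minus the identity. -/
noncomputable def Dmap {H : Type} [AddCommGroup H] [Module ℤ H]
    (δ : H →ₗ[ℤ] H) : ExteriorAlgebra ℤ H →ₗ[ℤ] ExteriorAlgebra ℤ H :=
  (ExteriorAlgebra.map δ).toLinearMap - LinearMap.id

lemma card_filter_lt_aux (k q : ℕ) (h : q ≤ k) :
    (Finset.univ.filter (fun i : Fin k => (i : ℕ) < q)).card = q := by
  classical
  have e : {i : Fin k // (i : ℕ) < q} ≃ Fin q :=
    { toFun := fun i => ⟨i.1.1, i.2⟩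
      invFun := fun j => ⟨⟨j.1, j.2.trans_le h⟩, j.2⟩
      left_inv := fun i => rfl
      right_inv := fun j => rfl }
  rw [← Fintype.card_subtype]
  rw [Fintype.card_congr e, Fintype.card_fin]

/-- If at least `r` of the entries of `v` lie in `Y` then `ιMulti v ∈ F_r`. -/
lemma iMulti_mem_Ffil {H : Type} [AddCommGroup H] [Module ℤ H]
    (Y : Submodule ℤ H) (k r : ℕ) (v : Fin k → H) (T : Finset (Fin k))
    (hcard : r ≤ T.card) (hT : ∀ i ∈ T, v i ∈ Y) :
    ExteriorAlgebra.ιMulti ℤ k v ∈ Ffil Y k r := by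
  classical
  have hrk : r ≤ k := hcard.trans (T.card_le_univ.trans_eq (by simp))
  simp only [Ffil, if_pos hrk]
  obtain ⟨T', hsub, hT'⟩ := Finset.exists_subset_card_eq hcard
  have e : {i : Fin k // (i : ℕ) < r} ≃ {i : Fin k // i ∈ T'} := by
    apply Fintype.equivOfCardEq
    rw [Fintype.card_subtype, card_filter_lt_aux k r hrk, Fintype.card_coe, hT']
  set σ : Equiv.Perm (Fin k) := e.extendSubtype with hσ
  have hmem : ∀ i : Fin k, (i : ℕ) < r → v (σ i) ∈ Y := by
    intro i hi
    exact hT _ (hsub (e.extendSubtype_mem i hi))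
  have hperm := (ExteriorAlgebra.ιMulti ℤ k).map_congr_perm (v := v) σ
  rw [hperm, Units.smul_def]
  exact Submodule.smul_mem _ _ (Submodule.subset_span ⟨v ∘ σ, hmem, rfl⟩)

lemma Ffil_anti {H : Type} [AddCommGroup H] [Module ℤ H]
    (Y : Submodule ℤ H) (k : ℕ) {p q : ℕ} (h : p ≤ q) :
    Ffil Y k q ≤ Ffil Y k p := by
  by_cases hq : q ≤ k
  · simp only [Ffil, if_pos hq, if_pos (h.trans hq)]
    apply Submodule.span_le.2
    rintro z ⟨v, hv, rfl⟩
    exact Submodule.subset_span ⟨v, fun i hi => hv i (hi.trans_le h), rfl⟩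
  · simp only [Ffil, if_neg hq]
    exact bot_le

/-- For `y₁,…,y_q ∈ Y` and `h₁,…,h_{k−q} ∈ H`, one has
`(δ−1)(y∧h₁∧⋯∧h_{k−q}) ≡ Σᵢ y∧h₁∧⋯∧(δ−1)hᵢ∧⋯∧h_{k−q}` modulo `F_{q+2}⋀ᵏH`;
in particular `(δ−1)(F_q⋀ᵏH) ⊆ F_{q+1}⋀ᵏH`. -/
theorem ceresa_stmt2 {H : Type} [AddCommGroup H] [Module ℤ H]
    [Module.Free ℤ H] [Module.Finite ℤ H]
    (δ : H →ₗ[ℤ] H) (hδ2 : (δ - LinearMap.id) ∘ₗ (δ - LinearMap.id) = 0)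
    (Y : Submodule ℤ H)
    (hY : ∀ x : H, x ∈ Y ↔ ∃ n : ℤ, n ≠ 0 ∧ n • x ∈ LinearMap.range (δ - LinearMap.id))
    (k q : ℕ) :
    (∀ v : Fin k → H, (∀ i : Fin k, (i : ℕ) < q → v i ∈ Y) →
      Dmap δ (ExteriorAlgebra.ιMulti ℤ k v)
        - ∑ i ∈ Finset.univ.filter (fun i : Fin k => q ≤ (i : ℕ)),
            ExteriorAlgebra.ιMulti ℤ k (Function.update v i (δ (v i) - v i))
        ∈ Ffil Y k (q + 2)) ∧
    Submodule.map (Dmap δ) (Ffil Y k q) ≤ Ffil Y k (q + 1) := by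
  classical
  set d : H →ₗ[ℤ] H := δ - LinearMap.id with hd
  -- δ - 1 maps into Y
  have hrange : ∀ x : H, d x ∈ Y := fun x =>
    (hY _).2 ⟨1, one_ne_zero, by simpa using LinearMap.mem_range_self d x⟩
  -- δ - 1 kills Y
  have hdY : ∀ x ∈ Y, d x = 0 := by
    intro x hx
    obtain ⟨n, hn, z, hz⟩ := (hY x).1 hx
    have h0 : d (n • x) = 0 := by
      rw [← hz]
      have := congrArg (fun f => f z) hδ2
      simpa using this
    rw [map_zsmul, ← Int.cast_smul_eq_zsmul ℤ] at h0
    rcases smul_eq_zero.1 h0 with h | h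
    · simp at h; exact absurd h hn
    · exact h
  -- the main congruence
  have main : ∀ v : Fin k → H, (∀ i : Fin k, (i : ℕ) < q → v i ∈ Y) →
      Dmap δ (ExteriorAlgebra.ιMulti ℤ k v)
        - ∑ i ∈ Finset.univ.filter (fun i : Fin k => q ≤ (i : ℕ)),
            ExteriorAlgebra.ιMulti ℤ k (Function.update v i (δ (v i) - v i))
        ∈ Ffil Y k (q + 2) := by
    intro v hv
    set f := ExteriorAlgebra.ιMulti ℤ k (M := H) with hf
    set w : Fin k → H := fun i => d (v i) with hw
    have hwv : δ ∘ v = w + v := by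
      funext i
      simp [hw, hd, sub_add_cancel]
    have hmap : ExteriorAlgebra.map δ (f v) = ∑ s : Finset (Fin k), f (s.piecewise w v) := by
      rw [ExteriorAlgebra.map_apply_ιMulti, hwv]
      exact f.toMultilinearMap.map_add_univ w v
    -- terms with an index < q in s vanish
    have hzero : ∀ s : Finset (Fin k), ∀ i ∈ s, (i : ℕ) < q → f (s.piecewise w v) = 0 := by
      intro s i hi hiq
      apply f.toMultilinearMap.map_coord_zero i
      rw [Finset.piecewise_eq_of_mem _ _ _ hi]
      exact hdY _ (hv i hiq)
    -- terms with s of card ≥ 2 and all indices ≥ q land in F_{q+2}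
    have hbig : ∀ s : Finset (Fin k), (∀ i ∈ s, q ≤ (i : ℕ)) → 2 ≤ s.card →
        f (s.piecewise w v) ∈ Ffil Y k (q + 2) := by
      intro s hs hcard
      have hqk : q ≤ k := by
        obtain ⟨i, hi⟩ := Finset.card_pos.1 (Nat.lt_of_lt_of_le Nat.zero_lt_two hcard)
        exact (hs i hi).trans (Nat.le_of_lt i.2)
      have hdisj : Disjoint s (Finset.univ.filter (fun i : Fin k => (i : ℕ) < q)) := by
        rw [Finset.disjoint_left]
        intro i hi hi'
        have := hs i hi
        simp only [Finset.mem_filter] at hi'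
        omega
      apply iMulti_mem_Ffil Y k (q + 2) _ (s ∪ Finset.univ.filter (fun i : Fin k => (i : ℕ) < q))
      · rw [Finset.card_union_of_disjoint hdisj, card_filter_lt_aux k q hqk]
        omega
      · intro i hi
        rcases Finset.mem_union.1 hi with h1 | h1
        · rw [Finset.piecewise_eq_of_mem _ _ _ h1]; exact hrange _
        · simp only [Finset.mem_filter] at h1
          have : i ∉ s := fun hc => by have := hs i hc; omega
          rw [Finset.piecewise_eq_of_notMem _ _ _ this]
          exact hv i h1.2
    -- the distinguished finsets: ∅ and singletons {i} with q ≤ i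
    set B : Finset (Finset (Fin k)) :=
      insert ∅ ((Finset.univ.filter (fun i : Fin k => q ≤ (i : ℕ))).image ({·})) with hB
    have hBsum : ∑ s ∈ B, f (s.piecewise w v)
        = f v + ∑ i ∈ Finset.univ.filter (fun i : Fin k => q ≤ (i : ℕ)),
            ExteriorAlgebra.ιMulti ℤ k (Function.update v i (δ (v i) - v i)) := by
      rw [hB, Finset.sum_insert (by simp),
        Finset.sum_image (by intro a _ b _ hab; simpa using hab)]
      rw [Finset.piecewise_empty]
      congr 1
      apply Finset.sum_congr rfl
      intro i _
      rw [Finset.piecewise_singleton]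
      rfl
    have hkey : Dmap δ (f v)
        - ∑ i ∈ Finset.univ.filter (fun i : Fin k => q ≤ (i : ℕ)),
            ExteriorAlgebra.ιMulti ℤ k (Function.update v i (δ (v i) - v i))
        = ∑ s ∈ Finset.univ \ B, f (s.piecewise w v) := by
      have hsplit : ∑ s ∈ (Finset.univ : Finset (Finset (Fin k))) \ B, f (s.piecewise w v)
            + ∑ s ∈ B, f (s.piecewise w v)
          = ∑ s : Finset (Fin k), f (s.piecewise w v) :=
        Finset.sum_sdiff (Finset.subset_univ B)
      have : Dmap δ (f v) = ∑ s : Finset (Fin k), f (s.piecewise w v) - f v := by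
        change (ExteriorAlgebra.map δ) (f v) - f v = _
        rw [hmap]
      rw [this, ← hsplit, hBsum]
      abel
    rw [hkey]
    apply Submodule.sum_mem
    intro s hs
    by_cases hlow : ∃ i ∈ s, (i : ℕ) < q
    · obtain ⟨i, hi, hiq⟩ := hlow
      rw [hzero s i hi hiq]
      exact Submodule.zero_mem _
    · push_neg at hlow
      apply hbig s (fun i hi => hlow i hi)
      -- s ∉ B : not empty, not a singleton of the filter
      simp only [Finset.mem_sdiff, hB, Finset.mem_insert, Finset.mem_image,
        Finset.mem_filter, Finset.mem_univ, true_and] at hs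
      push_neg at hs
      obtain ⟨hne, hnsingle⟩ := hs
      have h1 : s.card ≠ 0 := fun h => Finset.nonempty_iff_ne_empty.1 hne (Finset.card_eq_zero.1 h)
      have h2 : s.card ≠ 1 := by
        intro h
        obtain ⟨i, hi⟩ := Finset.card_eq_one.1 h
        have : q ≤ (i : ℕ) := hlow i (by simp [hi])
        exact hnsingle i this hi.symm
      omega
  refine ⟨main, ?_⟩
  -- second part
  rw [Submodule.map_le_iff_le_comap]
  by_cases hqk : q ≤ k
  · conv_lhs => rw [Ffil, if_pos hqk]
    apply Submodule.span_le.2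
    rintro z ⟨v, hv, rfl⟩
    simp only [SetLike.mem_coe, Submodule.mem_comap]
    have h1 := main v hv
    have h2 : ∑ i ∈ Finset.univ.filter (fun i : Fin k => q ≤ (i : ℕ)),
        ExteriorAlgebra.ιMulti ℤ k (Function.update v i (δ (v i) - v i))
        ∈ Ffil Y k (q + 1) := by
      apply Submodule.sum_mem
      intro i hi
      simp only [Finset.mem_filter, Finset.mem_univ, true_and] at hi
      apply iMulti_mem_Ffil Y k (q + 1) _
        (insert i (Finset.univ.filter (fun j : Fin k => (j : ℕ) < q)))
      · rw [Finset.card_insert_of_notMem, card_filter_lt_aux k q hqk]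
        simp only [Finset.mem_filter, Finset.mem_univ, true_and]
        omega
      · intro j hj
        rcases Finset.mem_insert.1 hj with h | h
        · subst h
          rw [Function.update_self]
          exact hrange (v j)
        · simp only [Finset.mem_filter, Finset.mem_univ, true_and] at h
          rw [Function.update_of_ne (fun hc => by subst hc; omega)]
          exact hv j h
    have := Submodule.add_mem _ (Ffil_anti Y k (by omega : q + 1 ≤ q + 2) h1) h2
    simpa using this
  · conv_lhs => rw [Ffil, if_neg hqk]
    exact bot_le
end

section
/- For every integer q with 2q > k, the map induced by δ−1 on rationalized graded pieces, (δ−1)_ℚ : gr_{q−1}^F∧ᵏH_ℚ → gr_q^F∧ᵏH_ℚ, is surjective. -/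
open Finset

/-- There is a permutation of `Fin k` sending the initial segment `[0, p)` into
a given finset `T` of cardinality `p`. -/
lemma exists_perm_into (k p : ℕ) (T : Finset (Fin k)) (hT : T.card = p) :
    ∃ σ : Equiv.Perm (Fin k), ∀ i : Fin k, (i : ℕ) < p → σ i ∈ T := by
  have hpk : p ≤ k := by
    rw [← hT]
    simpa using T.card_le_univ
  have hcompl : Tᶜ.card = k - p := by
    rw [Finset.card_compl, hT]; simp
  have hk : k = p + (k - p) := by omega
  let e1 : Fin p ≃ T := (T.orderIsoOfFin hT).toEquiv
  let e2 : Fin (k - p) ≃ (Tᶜ : Finset (Fin k)) := (Tᶜ.orderIsoOfFin hcompl).toEquiv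
  let e3 : (Tᶜ : Finset (Fin k)) ≃ {x : Fin k // ¬ x ∈ T} :=
    Equiv.subtypeEquivRight (fun x => Finset.mem_compl)
  let σ : Equiv.Perm (Fin k) :=
    ((finCongr hk).trans finSumFinEquiv.symm).trans
      ((e1.sumCongr (e2.trans e3)).trans (Equiv.sumCompl (· ∈ T)))
  refine ⟨σ, fun i hi => ?_⟩
  have h1 : (finCongr hk) i = Fin.castAdd (k - p) ⟨(i : ℕ), hi⟩ := by
    ext; simp
  show ((e1.sumCongr (e2.trans e3)).trans (Equiv.sumCompl (· ∈ T)))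
      (finSumFinEquiv.symm ((finCongr hk) i)) ∈ T
  rw [h1, finSumFinEquiv_symm_apply_castAdd]
  simp

/-- If at least `p` of the entries of `v` lie in `Y`, then the wedge of the `v i` lies in
`Ffil Y k p`. -/
lemma mem_Ffil_of {H : Type} [AddCommGroup H] [Module ℤ H] (Y : Submodule ℤ H)
    {k p : ℕ} (v : Fin k → H) (S : Finset (Fin k)) (hcard : p ≤ S.card)
    (hS : ∀ i ∈ S, v i ∈ Y) :
    ExteriorAlgebra.ιMulti ℤ k v ∈ Ffil Y k p := by
  obtain ⟨T, hTS, hT⟩ := Finset.exists_subset_card_eq hcard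
  have hpk : p ≤ k := by rw [← hT]; simpa using T.card_le_univ
  obtain ⟨σ, hσ⟩ := exists_perm_into k p T hT
  rw [Ffil, if_pos hpk]
  have hmem : ExteriorAlgebra.ιMulti ℤ k (v ∘ σ) ∈
      Submodule.span ℤ {z | ∃ v : Fin k → H,
        (∀ i : Fin k, (i : ℕ) < p → v i ∈ Y) ∧ z = ExteriorAlgebra.ιMulti ℤ k v} :=
    Submodule.subset_span ⟨v ∘ σ, fun i hi => hS _ (hTS (hσ i hi)), rfl⟩
  have hperm := (ExteriorAlgebra.ιMulti ℤ k).map_perm v σ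
  have hv : ExteriorAlgebra.ιMulti ℤ k v
      = ((Equiv.Perm.sign σ : ℤˣ) : ℤ) • ExteriorAlgebra.ιMulti ℤ k (v ∘ σ) := by
    rw [hperm, Units.smul_def, smul_smul, ← Units.val_mul, Int.units_mul_self, Units.val_one,
      one_smul]
  rw [hv]
  exact Submodule.smul_mem _ _ hmem

section Combinatorics

variable {α : Type*} [DecidableEq α] {M : Type*} [AddCommMonoid M]

/-- Reindexing pairs `(J, j)` with `j ∈ J`, `|J| = n+1` as pairs `(I, i)` with `|I| = n`,
`i ∈ S \ I`, via `I = J.erase j`. -/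
lemma sum_powersetCard_erase (S : Finset α) (n : ℕ) (g : Finset α → α → M) :
    ∑ J ∈ S.powersetCard (n + 1), ∑ j ∈ J, g (J.erase j) j
      = ∑ I ∈ S.powersetCard n, ∑ i ∈ S \ I, g I i := by
  rw [Finset.sum_sigma', Finset.sum_sigma']
  refine Finset.sum_nbij' (fun p => ⟨p.1.erase p.2, p.2⟩) (fun p => ⟨insert p.2 p.1, p.2⟩)
    ?_ ?_ ?_ ?_ ?_
  · rintro ⟨J, j⟩ hp
    simp only [Finset.mem_sigma, Finset.mem_powersetCard] at hp ⊢
    obtain ⟨⟨hJS, hJc⟩, hj⟩ := hp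
    refine ⟨⟨(J.erase_subset j).trans hJS, ?_⟩, ?_⟩
    · rw [Finset.card_erase_of_mem hj, hJc]; rfl
    · simp only [Finset.mem_sdiff, Finset.mem_erase]
      exact ⟨hJS hj, fun h => h.1 rfl⟩
  · rintro ⟨I, i⟩ hp
    simp only [Finset.mem_sigma, Finset.mem_powersetCard, Finset.mem_sdiff] at hp ⊢
    obtain ⟨⟨hIS, hIc⟩, hiS, hiI⟩ := hp
    refine ⟨⟨Finset.insert_subset hiS hIS, ?_⟩, Finset.mem_insert_self _ _⟩
    rw [Finset.card_insert_of_notMem hiI, hIc]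
  · rintro ⟨J, j⟩ hp
    simp only [Finset.mem_sigma, Finset.mem_powersetCard] at hp
    simp [Finset.insert_erase hp.2]
  · rintro ⟨I, i⟩ hp
    simp only [Finset.mem_sigma, Finset.mem_powersetCard, Finset.mem_sdiff] at hp
    simp [Finset.erase_insert hp.2.2]
  · rintro ⟨J, j⟩ _
    rfl

lemma sum_powersetCard_choose (S : Finset α) (n : ℕ) (f : Finset α → M) :
    ∑ J ∈ S.powersetCard (n + 1), ∑ j ∈ J, f (J.erase j)
      = (S.card - n) • ∑ I ∈ S.powersetCard n, f I := by
  rw [sum_powersetCard_erase S n (fun I _ => f I), Finset.smul_sum]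
  refine Finset.sum_congr rfl fun I hI => ?_
  rw [Finset.sum_const]
  congr 1
  rw [Finset.mem_powersetCard] at hI
  rw [Finset.card_sdiff_of_subset hI.1, hI.2]

lemma sum_powersetCard_insert (S : Finset α) (n : ℕ) (f : Finset α → M) :
    ∑ I ∈ S.powersetCard n, ∑ i ∈ S \ I, f (insert i I)
      = (n + 1) • ∑ J ∈ S.powersetCard (n + 1), f J := by
  rw [← sum_powersetCard_erase S n (fun I i => f (insert i I)), Finset.smul_sum]
  refine Finset.sum_congr rfl fun J hJ => ?_
  rw [Finset.mem_powersetCard] at hJ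
  have h : ∀ j ∈ J, f (insert j (J.erase j)) = f J := fun j hj => by
    rw [Finset.insert_erase hj]
  rw [Finset.sum_congr rfl h, Finset.sum_const, hJ.2]

end Combinatorics

set_option maxHeartbeats 1000000 in
/-- Expansion of `Dmap δ` applied to a wedge whose entries indexed by `A` lie in `Y`:
modulo `Ffil Y k (q+1)`, it is the sum of single-slot replacements outside of `A`. -/
lemma Dmap_ιMulti_expand {H : Type} [AddCommGroup H] [Module ℤ H]
    (δ : H →ₗ[ℤ] H) (Y : Submodule ℤ H)
    (hfix : ∀ y ∈ Y, δ y = y) (hran : ∀ h : H, δ h - h ∈ Y)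
    {k q : ℕ} (u : Fin k → H) (A : Finset (Fin k))
    (hA : ∀ i ∈ A, u i ∈ Y) (hAcard : q ≤ A.card + 1) :
    Dmap δ (ExteriorAlgebra.ιMulti ℤ k u)
      - ∑ i ∈ Aᶜ, ExteriorAlgebra.ιMulti ℤ k (Function.update u i (δ (u i) - u i))
      ∈ Ffil Y k (q + 1) := by
  classical
  have hmap : Dmap δ (ExteriorAlgebra.ιMulti ℤ k u)
      = (ExteriorAlgebra.ιMulti ℤ k)
          ((fun i => δ (u i) - u i) + u)
        - ExteriorAlgebra.ιMulti ℤ k u := by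
    have h1 : ExteriorAlgebra.map δ (ExteriorAlgebra.ιMulti ℤ k u)
        = ExteriorAlgebra.ιMulti ℤ k (δ ∘ u) :=
      ExteriorAlgebra.map_apply_ιMulti δ u
    have h2 : δ ∘ u = (fun i => δ (u i) - u i) + u := by
      funext i; simp [Function.comp]
    change ExteriorAlgebra.map δ (ExteriorAlgebra.ιMulti ℤ k u) - ExteriorAlgebra.ιMulti ℤ k u = _
    rw [h1, h2]
  rw [hmap, AlternatingMap.map_add_univ]
  set du : Fin k → H := fun i => δ (u i) - u i with hdu
  set T : Finset (Fin k) → ExteriorAlgebra ℤ H := fun s =>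
    (ExteriorAlgebra.ιMulti ℤ k) (s.piecewise du u) with hT
  set B : Finset (Finset (Fin k)) := insert ∅ (Aᶜ.image fun i => ({i} : Finset (Fin k)))
    with hB
  have hnotmem : (∅ : Finset (Fin k)) ∉ Aᶜ.image fun i => ({i} : Finset (Fin k)) := by
    rw [Finset.mem_image]
    rintro ⟨i, -, h⟩
    exact Finset.singleton_ne_empty i h
  have hinj : ∀ x ∈ Aᶜ, ∀ y ∈ Aᶜ, ({x} : Finset (Fin k)) = {y} → x = y := by
    intro x _ y _ h
    exact Finset.singleton_injective h
  have hsplit : ∑ s ∈ (univ : Finset (Finset (Fin k))) \ B, T s + ∑ s ∈ B, T s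
      = ∑ s : Finset (Fin k), T s := Finset.sum_sdiff (Finset.subset_univ B)
  have hsingle : ∀ i : Fin k,
      T {i} = ExteriorAlgebra.ιMulti ℤ k (Function.update u i (du i)) := by
    intro i
    rw [hT]
    simp only [Finset.piecewise_singleton]
  have hBsum : ∑ s ∈ B, T s
      = T ∅ + ∑ i ∈ Aᶜ, ExteriorAlgebra.ιMulti ℤ k (Function.update u i (du i)) := by
    rw [hB, Finset.sum_insert hnotmem, Finset.sum_image hinj]
    exact congrArg _ (Finset.sum_congr rfl fun i _ => hsingle i)
  have hTempty : T ∅ = ExteriorAlgebra.ιMulti ℤ k u := by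
    rw [hT]; simp only [Finset.piecewise_empty]
  have hgoal : (∑ s : Finset (Fin k), T s) - ExteriorAlgebra.ιMulti ℤ k u
      - ∑ i ∈ Aᶜ, ExteriorAlgebra.ιMulti ℤ k (Function.update u i (du i))
      = ∑ s ∈ (univ : Finset (Finset (Fin k))) \ B, T s := by
    rw [← hsplit, hBsum, hTempty]; abel
  simp only [hdu] at hgoal
  rw [hgoal]
  refine Submodule.sum_mem _ fun s hs => ?_
  rw [Finset.mem_sdiff, hB, Finset.mem_insert, Finset.mem_image] at hs
  push_neg at hs
  obtain ⟨-, hne, hnsing⟩ := hs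
  by_cases hsA : (s ∩ A).Nonempty
  · obtain ⟨i, hi⟩ := hsA
    rw [Finset.mem_inter] at hi
    have hz : (s.piecewise du u) i = 0 := by
      rw [Finset.piecewise_eq_of_mem _ _ _ hi.1, hdu]
      simp [hfix _ (hA i hi.2)]
    have hz2 : T s = 0 := by
      show ExteriorAlgebra.ιMulti ℤ k (s.piecewise du u) = 0
      exact AlternatingMap.map_coord_zero _ i hz
    rw [hz2]
    exact Submodule.zero_mem _
  · have hsub : ∀ x ∈ s, x ∉ A := by
      intro x hx hxA
      exact hsA ⟨x, Finset.mem_inter.2 ⟨hx, hxA⟩⟩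
    have h2 : 2 ≤ s.card := by
      rcases Nat.lt_or_ge s.card 2 with h | h
      · interval_cases hc : s.card
        · exact absurd (Finset.card_eq_zero.1 hc) (Finset.nonempty_iff_ne_empty.1 hne)
        · obtain ⟨i, rfl⟩ := Finset.card_eq_one.1 hc
          exact absurd rfl
            (hnsing i (Finset.mem_compl.2 (hsub i (Finset.mem_singleton_self i))))
      · exact h
    have hdisj : Disjoint A s := by
      rw [Finset.disjoint_right]
      exact hsub
    refine mem_Ffil_of Y _ (A ∪ s) ?_ ?_
    · rw [Finset.card_union_of_disjoint hdisj]
      omega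
    · intro i hi
      rcases Finset.mem_union.1 hi with hiA | his
      · rw [Finset.piecewise_eq_of_notMem _ _ _ (Finset.disjoint_left.1 hdisj hiA)]
        exact hA i hiA
      · rw [Finset.piecewise_eq_of_mem _ _ _ his, hdu]
        exact hran (u i)

/-- A finitely generated free `ℤ`-module is torsion-free. -/
lemma zsmul_torsionfree {H : Type} [AddCommGroup H] [Module ℤ H] [Module.Free ℤ H]
    (m : ℤ) (hm : m ≠ 0) (x : H) (h : m • x = 0) : x = 0 := by
  let b := Module.Free.chooseBasis ℤ H
  have h1 : b.repr x = 0 := by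
    ext i
    have h2 : (Finsupp.applyAddHom i : (_ →₀ ℤ) →+ ℤ).comp b.repr.toLinearMap.toAddMonoidHom
        (m • x) = 0 := by rw [h]; simp
    rw [map_zsmul] at h2
    have h3 : m • ((Finsupp.applyAddHom i : (_ →₀ ℤ) →+ ℤ).comp
        b.repr.toLinearMap.toAddMonoidHom x) = m * b.repr x i := by
      simp [zsmul_eq_mul]
    rw [h3] at h2
    rcases mul_eq_zero.1 h2 with h4 | h4
    · exact absurd h4 hm
    · simpa using h4
  exact b.repr.injective (by simpa using h1)

set_option maxHeartbeats 3000000 in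
/-- For `2q > k`, the map `(δ−1)_ℚ : gr_{q−1}^F ⋀ᵏH_ℚ → gr_q^F ⋀ᵏH_ℚ` induced by `δ−1`
on rationalized graded pieces is surjective; equivalently, for every `z ∈ F_q⋀ᵏH` there are
a nonzero integer `n` and `x ∈ F_{q−1}⋀ᵏH` with `n•z − (δ−1)x ∈ F_{q+1}⋀ᵏH`. -/
theorem ceresa_stmt3 {H : Type} [AddCommGroup H] [Module ℤ H]
    [Module.Free ℤ H] [Module.Finite ℤ H]
    (δ : H →ₗ[ℤ] H) (hδ2 : (δ - LinearMap.id) ∘ₗ (δ - LinearMap.id) = 0)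
    (Y : Submodule ℤ H)
    (hY : ∀ x : H, x ∈ Y ↔ ∃ n : ℤ, n ≠ 0 ∧ n • x ∈ LinearMap.range (δ - LinearMap.id))
    (k q : ℕ) (hq : k < 2 * q) :
    ∀ z ∈ Ffil Y k q, ∃ n : ℤ, n ≠ 0 ∧ ∃ x ∈ Ffil Y k (q - 1),
      n • z - Dmap δ x ∈ Ffil Y k (q + 1) := by
  classical
  -- basic consequences of the hypotheses
  have hd2 : ∀ h : H, δ (δ h - h) - (δ h - h) = 0 := by
    intro h
    have h0 := LinearMap.congr_fun hδ2 h
    simpa [LinearMap.sub_apply, LinearMap.id_apply] using h0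
  have hran : ∀ h : H, δ h - h ∈ Y := by
    intro h
    rw [hY]
    exact ⟨1, one_ne_zero, ⟨h, by simp⟩⟩
  have hfix : ∀ y ∈ Y, δ y = y := by
    intro y hy
    obtain ⟨n, hn, x, hx⟩ := (hY y).1 hy
    have hx' : δ x - x = n • y := by simpa [LinearMap.sub_apply] using hx
    have hmapz : δ (n • y) = n • δ y := map_zsmul δ.toAddMonoidHom n y
    have h1 : n • (δ y - y) = 0 := by
      calc n • (δ y - y) = δ (n • y) - n • y := by rw [zsmul_sub, hmapz]
        _ = 0 := by rw [← hx']; exact hd2 x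
    have h2 : δ y - y = 0 := zsmul_torsionfree n hn _ h1
    rw [sub_eq_zero] at h2
    exact h2
  intro z hz
  by_cases hqk : q ≤ k
  swap
  · -- trivial case `q > k`: the filtration step is `⊥`
    rw [Ffil, if_neg hqk, Submodule.mem_bot] at hz
    subst hz
    refine ⟨1, one_ne_zero, 0, Submodule.zero_mem _, ?_⟩
    simpa using Submodule.zero_mem (Ffil Y k (q + 1))
  have hq1 : 1 ≤ q := by omega
  -- the submodule of elements admitting the desired lift
  let G : Submodule ℤ (ExteriorAlgebra ℤ H) :=
  { carrier := {z | ∃ n : ℤ, n ≠ 0 ∧ ∃ x ∈ Ffil Y k (q - 1),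
      n • z - Dmap δ x ∈ Ffil Y k (q + 1)}
    zero_mem' := ⟨1, one_ne_zero, 0, Submodule.zero_mem _, by
      simpa using Submodule.zero_mem (Ffil Y k (q + 1))⟩
    add_mem' := by
      rintro a b ⟨n, hn, x, hx, hmem⟩ ⟨m, hm, w, hw, hmem'⟩
      refine ⟨n * m, mul_ne_zero hn hm, m • x + n • w,
        Submodule.add_mem _ (Submodule.smul_mem _ _ hx) (Submodule.smul_mem _ _ hw), ?_⟩
      have heq : (n * m) • (a + b) - Dmap δ (m • x + n • w)
          = m • (n • a - Dmap δ x) + n • (m • b - Dmap δ w) := by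
        rw [map_add, map_smul, map_smul]
        rw [smul_add, smul_sub, smul_sub, smul_smul, smul_smul, mul_comm m n]
        abel
      rw [heq]
      exact Submodule.add_mem _ (Submodule.smul_mem _ _ hmem) (Submodule.smul_mem _ _ hmem')
    smul_mem' := by
      rintro c a ⟨n, hn, x, hx, hmem⟩
      refine ⟨n, hn, c • x, Submodule.smul_mem _ _ hx, ?_⟩
      have heq : n • (c • a) - Dmap δ (c • x) = c • (n • a - Dmap δ x) := by
        rw [map_smul, smul_sub, smul_smul, smul_smul, mul_comm n c]
      rw [heq]
      exact Submodule.smul_mem _ _ hmem }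
  have hGdiv : ∀ (n : ℤ), n ≠ 0 → ∀ u : ExteriorAlgebra ℤ H, n • u ∈ G → u ∈ G := by
    rintro n hn u ⟨m, hm, x, hx, hmem⟩
    exact ⟨m * n, mul_ne_zero hm hn, x, hx, by rwa [mul_smul]⟩
  have hFG : ∀ u ∈ Ffil Y k (q + 1), u ∈ G := fun u hu =>
    ⟨1, one_ne_zero, 0, Submodule.zero_mem _, by simpa using hu⟩
  have hDG : ∀ x ∈ Ffil Y k (q - 1), Dmap δ x ∈ G := fun x hx =>
    ⟨1, one_ne_zero, x, hx, by simpa using Submodule.zero_mem (Ffil Y k (q + 1))⟩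
  suffices hzG : z ∈ G by exact hzG
  rw [Ffil, if_pos hqk] at hz
  refine Submodule.span_le.2 ?_ hz
  rintro _ ⟨v, hv, rfl⟩
  show ExteriorAlgebra.ιMulti ℤ k v ∈ G
  -- scale the first `q` entries of `v` into the image of `δ - 1`
  have key : ∀ i : Fin k, ∃ pr : ℤ × H, pr.1 ≠ 0 ∧
      ((i : ℕ) < q → pr.1 • v i = δ pr.2 - pr.2) ∧ (¬ (i : ℕ) < q → pr.1 = 1) := by
    intro i
    by_cases hi : (i : ℕ) < q
    · obtain ⟨n, hn, x, hx⟩ := (hY (v i)).1 (hv i hi)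
      have hx' : δ x - x = n • v i := by simpa [LinearMap.sub_apply] using hx
      exact ⟨(n, x), hn, fun _ => hx'.symm, fun h => absurd hi h⟩
    · exact ⟨(1, 0), one_ne_zero, fun h => absurd h hi, fun _ => rfl⟩
  choose pr hp1 hp2 hp3 using key
  set c : Fin k → ℤ := fun i => (pr i).1 with hc
  set w : Fin k → H := fun i => (pr i).2 with hw
  set v' : Fin k → H := fun i => if (i : ℕ) < q then δ (w i) - w i else v i with hv'
  have hNzero : (∏ i, c i) ≠ 0 := Finset.prod_ne_zero_iff.2 fun i _ => hp1 i
  have hscale0 := AlternatingMap.map_smul_univ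
    (ExteriorAlgebra.ιMulti ℤ k) c v
  have hscale : ExteriorAlgebra.ιMulti ℤ k v' = (∏ i, c i) • ExteriorAlgebra.ιMulti ℤ k v := by
    refine Eq.trans (congrArg _ ?_) hscale0
    funext i
    refine Eq.trans ?_ (int_smul_eq_zsmul ‹Module ℤ H› (c i) (v i)).symm
    simp only [hv', hc]
    by_cases hi : (i : ℕ) < q
    · rw [if_pos hi]
      exact (hp2 i hi).symm
    · rw [if_neg hi, hp3 i hi, one_zsmul]
  have hv'Y : ∀ i : Fin k, (i : ℕ) < q → v' i ∈ Y := by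
    intro i hi
    simp only [hv']
    rw [if_pos hi]
    exact hran (w i)
  have hv'ran : ∀ i : Fin k, (i : ℕ) < q → v' i = δ (w i) - w i := by
    intro i hi
    simp only [hv']
    rw [if_pos hi]
  -- the two blocks of indices
  set Q : Finset (Fin k) := Finset.univ.filter (fun i : Fin k => (i : ℕ) < q) with hQ
  have hQmem : ∀ i : Fin k, i ∈ Q ↔ (i : ℕ) < q := by
    intro i; rw [hQ, Finset.mem_filter]; simp
  have hQcard : Q.card = q := by
    have himg : Q = Finset.map (Fin.castLEEmb hqk) Finset.univ := by
      ext i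
      simp only [hQ, Finset.mem_filter, Finset.mem_univ, true_and, Finset.mem_map]
      simp only [Fin.castLEEmb, Function.Embedding.coeFn_mk]
      constructor
      · intro hi
        exact ⟨⟨(i : ℕ), hi⟩, by ext; rfl⟩
      · rintro ⟨j, rfl⟩
        exact j.isLt
    rw [himg, Finset.card_map, Finset.card_univ, Fintype.card_fin]
  set R : Finset (Fin k) := Qᶜ with hR
  have hRmem : ∀ i : Fin k, i ∈ R ↔ ¬ (i : ℕ) < q := by
    intro i; rw [hR, Finset.mem_compl, hQmem]
  have hRcard : R.card = k - q := by
    rw [hR, Finset.card_compl, hQcard, Fintype.card_fin]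
  -- the multi-replacement wedges and their sums
  set repl : Finset (Fin k) → Finset (Fin k) → Fin k → H := fun J I i =>
    if i ∈ J then w i else if i ∈ I then δ (v' i) - v' i else v' i with hrepl
  set U : ℕ → ExteriorAlgebra ℤ H := fun m =>
    ∑ J ∈ Q.powersetCard m, ∑ I ∈ R.powersetCard m,
      ExteriorAlgebra.ιMulti ℤ k (repl J I) with hU
  -- the descending induction step
  have hstep : ∀ m : ℕ, m + 1 ≤ q → U (m + 1) ∈ G → U m ∈ G := by
    intro m hm hUm1
    set X : ExteriorAlgebra ℤ H := ∑ J ∈ Q.powersetCard (m + 1), ∑ I ∈ R.powersetCard m,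
      ExteriorAlgebra.ιMulti ℤ k (repl J I) with hX
    have hperterm : ∀ J ∈ Q.powersetCard (m + 1), ∀ I ∈ R.powersetCard m,
        Dmap δ (ExteriorAlgebra.ιMulti ℤ k (repl J I))
          - (∑ j ∈ J, ExteriorAlgebra.ιMulti ℤ k (repl (J.erase j) I)
            + ∑ i ∈ R \ I, ExteriorAlgebra.ιMulti ℤ k (repl J (insert i I)))
          ∈ Ffil Y k (q + 1) := by
      intro J hJ I hI
      rw [Finset.mem_powersetCard] at hJ hI
      obtain ⟨hJQ, hJc⟩ := hJ
      obtain ⟨hIR, hIc⟩ := hI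
      have hJq : ∀ j ∈ J, (j : ℕ) < q := fun j hj => (hQmem j).1 (hJQ hj)
      have hInq : ∀ i ∈ I, ¬ (i : ℕ) < q := fun i hi => (hRmem i).1 (hIR hi)
      have hdisjA : Disjoint (Q \ J) I := by
        rw [Finset.disjoint_left]
        intro a ha haI
        exact hInq a haI ((hQmem a).1 (Finset.mem_sdiff.1 ha).1)
      have hAcard : ((Q \ J) ∪ I).card = q - 1 := by
        rw [Finset.card_union_of_disjoint hdisjA, Finset.card_sdiff_of_subset hJQ, hQcard, hJc, hIc]
        omega
      have hAY : ∀ i ∈ (Q \ J) ∪ I, repl J I i ∈ Y := by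
        intro i hi
        rcases Finset.mem_union.1 hi with h | h
        · obtain ⟨hiQ, hiJ⟩ := Finset.mem_sdiff.1 h
          have hiI : i ∉ I := fun hh => hInq i hh ((hQmem i).1 hiQ)
          simp only [hrepl]
          rw [if_neg hiJ, if_neg hiI]
          exact hv'Y i ((hQmem i).1 hiQ)
        · have hiJ : i ∉ J := fun hh => hInq i h ((hQmem i).1 (hJQ hh))
          simp only [hrepl]
          rw [if_neg hiJ, if_pos h]
          exact hran (v' i)
      have hmain := Dmap_ιMulti_expand (k := k) (q := q) δ Y hfix hran (repl J I)
        ((Q \ J) ∪ I) hAY (by have h := hAcard; omega)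
      have hAc : ((Q \ J) ∪ I)ᶜ = J ∪ (R \ I) := by
        ext i
        rw [Finset.mem_compl, Finset.mem_union, Finset.mem_union, Finset.mem_sdiff,
          Finset.mem_sdiff, hR, Finset.mem_compl]
        have h1 : i ∈ J → i ∈ Q := fun h => hJQ h
        have h2 : i ∈ I → ¬ i ∈ Q := fun h hq' => hInq i h ((hQmem i).1 hq')
        tauto
      rw [hAc, Finset.sum_union (by
        rw [Finset.disjoint_left]
        intro a haJ haRI
        exact (hRmem a).1 (Finset.mem_sdiff.1 haRI).1 ((hQmem a).1 (hJQ haJ)))] at hmain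
      have e1 : ∀ j ∈ J, ExteriorAlgebra.ιMulti ℤ k
          (Function.update (repl J I) j (δ (repl J I j) - repl J I j))
          = ExteriorAlgebra.ιMulti ℤ k (repl (J.erase j) I) := by
        intro j hj
        have hjq : (j : ℕ) < q := hJq j hj
        have hjI : j ∉ I := fun hh => hInq j hh hjq
        congr 1
        funext x
        rcases eq_or_ne x j with rfl | hx
        · rw [Function.update_self]
          have h1 : repl J I x = w x := by simp only [hrepl]; rw [if_pos hj]
          have h2 : repl (J.erase x) I x = v' x := by
            simp only [hrepl]
            rw [if_neg (fun hh => (Finset.mem_erase.1 hh).1 rfl), if_neg hjI]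
          rw [h1, h2, hv'ran x hjq]
        · rw [Function.update_of_ne hx]
          simp only [hrepl]
          by_cases hxJ : x ∈ J
          · rw [if_pos hxJ, if_pos (Finset.mem_erase.2 ⟨hx, hxJ⟩)]
          · rw [if_neg hxJ, if_neg (fun hh => hxJ (Finset.mem_of_mem_erase hh))]
      have e2 : ∀ i ∈ R \ I, ExteriorAlgebra.ιMulti ℤ k
          (Function.update (repl J I) i (δ (repl J I i) - repl J I i))
          = ExteriorAlgebra.ιMulti ℤ k (repl J (insert i I)) := by
        intro i hi
        obtain ⟨hiR, hiI⟩ := Finset.mem_sdiff.1 hi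
        have hiJ : i ∉ J := fun hh => (hRmem i).1 hiR ((hQmem i).1 (hJQ hh))
        congr 1
        funext x
        rcases eq_or_ne x i with rfl | hx
        · rw [Function.update_self]
          have h1 : repl J I x = v' x := by
            simp only [hrepl]; rw [if_neg hiJ, if_neg hiI]
          have h2 : repl J (insert x I) x = δ (v' x) - v' x := by
            simp only [hrepl]; rw [if_neg hiJ, if_pos (Finset.mem_insert_self x I)]
          rw [h1, h2]
        · rw [Function.update_of_ne hx]
          simp only [hrepl]
          by_cases hxJ : x ∈ J
          · rw [if_pos hxJ, if_pos hxJ]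
          · rw [if_neg hxJ, if_neg hxJ]
            by_cases hxI : x ∈ I
            · rw [if_pos hxI, if_pos (Finset.mem_insert_of_mem hxI)]
            · rw [if_neg hxI, if_neg (fun hh => (Finset.mem_insert.1 hh).elim hx hxI)]
      rw [Finset.sum_congr rfl e1, Finset.sum_congr rfl e2] at hmain
      exact hmain
    set S1 : ExteriorAlgebra ℤ H := ∑ J ∈ Q.powersetCard (m + 1), ∑ I ∈ R.powersetCard m,
        ∑ j ∈ J, ExteriorAlgebra.ιMulti ℤ k (repl (J.erase j) I) with hS1
    set S2 : ExteriorAlgebra ℤ H := ∑ J ∈ Q.powersetCard (m + 1), ∑ I ∈ R.powersetCard m,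
        ∑ i ∈ R \ I, ExteriorAlgebra.ιMulti ℤ k (repl J (insert i I)) with hS2
    have heq : ∑ J ∈ Q.powersetCard (m + 1), ∑ I ∈ R.powersetCard m,
        (Dmap δ (ExteriorAlgebra.ιMulti ℤ k (repl J I))
          - (∑ j ∈ J, ExteriorAlgebra.ιMulti ℤ k (repl (J.erase j) I)
            + ∑ i ∈ R \ I, ExteriorAlgebra.ιMulti ℤ k (repl J (insert i I))))
        = Dmap δ X - (S1 + S2) := by
      rw [hX, hS1, hS2, map_sum, ← Finset.sum_add_distrib, ← Finset.sum_sub_distrib]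
      refine Finset.sum_congr rfl fun J _ => ?_
      rw [map_sum, ← Finset.sum_add_distrib, ← Finset.sum_sub_distrib]
    have htot : Dmap δ X - (S1 + S2) ∈ Ffil Y k (q + 1) := by
      rw [← heq]
      exact Submodule.sum_mem _ fun J hJ => Submodule.sum_mem _ fun I hI => hperterm J hJ I hI
    have hS1v : S1 = (q - m) • U m := by
      rw [hS1, Finset.sum_comm]
      have h1 : ∀ I ∈ R.powersetCard m,
          ∑ J ∈ Q.powersetCard (m + 1), ∑ j ∈ J,
            ExteriorAlgebra.ιMulti ℤ k (repl (J.erase j) I)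
            = (q - m) • ∑ J ∈ Q.powersetCard m, ExteriorAlgebra.ιMulti ℤ k (repl J I) := by
        intro I _
        rw [sum_powersetCard_choose Q m (fun J => ExteriorAlgebra.ιMulti ℤ k (repl J I)),
          hQcard]
      rw [Finset.sum_congr rfl h1, ← Finset.smul_sum]
      simp only [hU]
      rw [Finset.sum_comm]
    have hS2v : S2 = (m + 1) • U (m + 1) := by
      rw [hS2]
      have h2 : ∀ J ∈ Q.powersetCard (m + 1),
          ∑ I ∈ R.powersetCard m, ∑ i ∈ R \ I,
            ExteriorAlgebra.ιMulti ℤ k (repl J (insert i I))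
            = (m + 1) • ∑ I ∈ R.powersetCard (m + 1), ExteriorAlgebra.ιMulti ℤ k (repl J I) :=
        fun J _ => sum_powersetCard_insert R m (fun I => ExteriorAlgebra.ιMulti ℤ k (repl J I))
      rw [Finset.sum_congr rfl h2, ← Finset.smul_sum]
    have hXF : X ∈ Ffil Y k (q - 1) := by
      rw [hX]
      refine Submodule.sum_mem _ fun J hJ => Submodule.sum_mem _ fun I hI => ?_
      rw [Finset.mem_powersetCard] at hJ hI
      obtain ⟨hJQ, hJc⟩ := hJ
      obtain ⟨hIR, hIc⟩ := hI
      have hdisjA : Disjoint (Q \ J) I := by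
        rw [Finset.disjoint_left]
        intro a ha haI
        exact (hRmem a).1 (hIR haI) ((hQmem a).1 (Finset.mem_sdiff.1 ha).1)
      refine mem_Ffil_of Y _ ((Q \ J) ∪ I) ?_ ?_
      · rw [Finset.card_union_of_disjoint hdisjA, Finset.card_sdiff_of_subset hJQ, hQcard, hJc, hIc]
        omega
      · intro i hi
        rcases Finset.mem_union.1 hi with h | h
        · obtain ⟨hiQ, hiJ⟩ := Finset.mem_sdiff.1 h
          have hiI : i ∉ I := fun hh => (hRmem i).1 (hIR hh) ((hQmem i).1 hiQ)
          simp only [hrepl]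
          rw [if_neg hiJ, if_neg hiI]
          exact hv'Y i ((hQmem i).1 hiQ)
        · have hiJ : i ∉ J := fun hh => (hRmem i).1 (hIR h) ((hQmem i).1 (hJQ hh))
          simp only [hrepl]
          rw [if_neg hiJ, if_pos h]
          exact hran (v' i)
    apply hGdiv ((q - m : ℕ) : ℤ) (by
      have : q - m ≠ 0 := by omega
      exact_mod_cast this)
    have hrw : ((q - m : ℕ) : ℤ) • U m
        = Dmap δ X - ((m + 1 : ℕ) : ℤ) • U (m + 1) - (Dmap δ X - (S1 + S2)) := by
      rw [hS1v, hS2v, natCast_zsmul, natCast_zsmul]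
      abel
    rw [hrw]
    exact Submodule.sub_mem _ (Submodule.sub_mem _ (hDG X hXF)
      (Submodule.smul_mem _ _ hUm1)) (hFG _ htot)
  -- descending induction
  have hdesc : ∀ j : ℕ, j ≤ k - q + 1 → U (k - q + 1 - j) ∈ G := by
    intro j
    induction j with
    | zero =>
      intro _
      have hempty : R.powersetCard (k - q + 1) = ∅ :=
        Finset.powersetCard_eq_empty.2 (by rw [hRcard]; omega)
      simp only [hU, Nat.sub_zero, hempty, Finset.sum_empty, Finset.sum_const_zero]
      exact Submodule.zero_mem _
    | succ j ih =>
      intro hj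
      have harith : k - q + 1 - j = (k - q + 1 - (j + 1)) + 1 := by omega
      have hUm1 : U ((k - q + 1 - (j + 1)) + 1) ∈ G := by
        rw [← harith]
        exact ih (by omega)
      exact hstep _ (by omega) hUm1
  have hU0 : U 0 ∈ G := by
    have h := hdesc (k - q + 1) le_rfl
    simpa using h
  have hU0eq : U 0 = ExteriorAlgebra.ιMulti ℤ k v' := by
    simp only [hU, Finset.powersetCard_zero, Finset.sum_singleton]
    congr 1
  rw [hU0eq] at hU0
  rw [hscale] at hU0
  exact hGdiv (∏ i, c i) hNzero _ hU0
end

section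
/- In the symplectic setting, both quotient groups Ā(δ) = (F₂L + H̃) / (((δ−1)(L) + H̃) ∩ (F₂L + H̃)) and B̄(δ) = (F₂L + H̃) / ((δ−1)(F₁L) + F₃L + H̃) are finite. -/
/-- The image `H̃` of `H` in `L = ⋀³H` under `h ↦ ω ∧ h`, where
`ω = Σᵢ αᵢ ∧ βᵢ` for a symplectic basis `e = (α₁,…,α_g,β₁,…,β_g)`. -/
noncomputable def Htil {H : Type} [AddCommGroup H] [Module ℤ H] {g : ℕ}
    (e : (Fin g ⊕ Fin g) → H) : Submodule ℤ (ExteriorAlgebra ℤ H) :=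
  Submodule.span ℤ {z | ∃ h : H,
    z = (∑ i : Fin g, ExteriorAlgebra.ι ℤ (e (Sum.inl i)) * ExteriorAlgebra.ι ℤ (e (Sum.inr i)))
        * ExteriorAlgebra.ι ℤ h}

open ExteriorAlgebra

section Aux

variable {H : Type} [AddCommGroup H] [Module ℤ H]

private lemma mul3 (a b c : H) : ιMulti ℤ 3 ![a,b,c] = ι ℤ a * ι ℤ b * ι ℤ c := by
  simp [ιMulti_apply, List.ofFn_succ, mul_assoc]

private lemma mul3' (v : Fin 3 → H) : ιMulti ℤ 3 v = ι ℤ (v 0) * ι ℤ (v 1) * ι ℤ (v 2) := by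
  simp [ιMulti_apply, List.ofFn_succ, mul_assoc, Matrix.vecTail, Fin.succ_zero_eq_one]

private lemma swap12 (a b c : H) : ι ℤ a * ι ℤ b * ι ℤ c = -(ι ℤ b * ι ℤ a * ι ℤ c) := by
  have h := ι_add_mul_swap (R := ℤ) a b
  have : ι ℤ a * ι ℤ b = -(ι ℤ b * ι ℤ a) := by linear_combination (norm := noncomm_ring) h
  rw [this]; noncomm_ring

private lemma swap23 (a b c : H) : ι ℤ a * ι ℤ b * ι ℤ c = -(ι ℤ a * ι ℤ c * ι ℤ b) := by
  have h := ι_add_mul_swap (R := ℤ) b c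
  have : ι ℤ b * ι ℤ c = -(ι ℤ c * ι ℤ b) := by linear_combination (norm := noncomm_ring) h
  rw [mul_assoc, this]; noncomm_ring

private lemma dmap3 (δ : H →ₗ[ℤ] H) (a b c : H) :
    Dmap δ (ι ℤ a * ι ℤ b * ι ℤ c)
      = ι ℤ (δ a) * ι ℤ (δ b) * ι ℤ (δ c) - ι ℤ a * ι ℤ b * ι ℤ c := by
  show (map δ) (ι ℤ a * ι ℤ b * ι ℤ c) - (ι ℤ a * ι ℤ b * ι ℤ c) = _
  simp [Dmap, map_apply_ι]

set_option linter.deprecated false in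
private lemma key_identity (δ : H →ₗ[ℤ] H) (y₁ y₂ h d x₁ x₂ : H) (n₁ n₂ : ℤ)
    (h1 : δ y₁ = y₁) (h2 : δ y₂ = y₂) (h3 : δ d = d)
    (h4 : δ x₁ = x₁ + n₁ • y₁) (h5 : δ x₂ = x₂ + n₂ • y₂) (h6 : δ h = h + d) :
    n₁ • Dmap δ (ι ℤ y₁ * ι ℤ x₂ * ι ℤ h) + n₂ • Dmap δ (ι ℤ x₁ * ι ℤ y₂ * ι ℤ h)
      - Dmap δ (ι ℤ x₁ * ι ℤ x₂ * ι ℤ d) - n₂ • Dmap δ (ι ℤ x₁ * ι ℤ y₂ * ι ℤ d)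
      = (2 * n₁ * n₂) • (ι ℤ y₁ * ι ℤ y₂ * ι ℤ h) := by
  simp only [← Int.cast_smul_eq_zsmul ℤ, Int.cast_id] at h4 h5 ⊢
  simp only [dmap3, h1, h2, h3, h4, h5, h6, map_add, LinearMap.map_smul]
  simp only [mul_add, add_mul, mul_smul_comm, smul_mul_assoc, smul_smul, smul_sub, sub_mul,
    mul_sub, smul_add, mul_assoc]
  module

/-- The saturation of a submodule over `ℤ`. -/
private def sat {A : Type} [AddCommGroup A] [Module ℤ A] (N : Submodule ℤ A) :
    Submodule ℤ A where
  carrier := {m | ∃ n : ℤ, n ≠ 0 ∧ n • m ∈ N}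
  add_mem' := by
    rintro a b ⟨n, hn, ha⟩ ⟨m, hm, hb⟩
    refine ⟨n * m, mul_ne_zero hn hm, ?_⟩
    rw [zsmul_add]
    exact N.add_mem (by rw [mul_comm, mul_zsmul]; exact zsmul_mem ha m)
      (by rw [mul_zsmul]; exact zsmul_mem hb n)
  zero_mem' := ⟨1, one_ne_zero, by simp⟩
  smul_mem' := by
    rintro c a ⟨n, hn, ha⟩
    refine ⟨n, hn, ?_⟩
    have h2 := map_zsmul (DistribMulAction.toAddMonoidHom A c) n a
    simp only [DistribMulAction.toAddMonoidHom_apply] at h2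
    rw [← h2]
    exact N.smul_mem c ha

private lemma le_sat {A : Type} [AddCommGroup A] [Module ℤ A] (N : Submodule ℤ A) :
    N ≤ sat N := fun x hx => ⟨1, one_ne_zero, by simpa using hx⟩

private lemma mem_pow3 (a b c : H) : ι ℤ a * ι ℤ b * ι ℤ c ∈ ⋀[ℤ]^3 H := by
  rw [← mul3]
  exact ιMulti_range ℤ 3 ⟨![a,b,c], rfl⟩

private lemma Ffil_eq (Y : Submodule ℤ H) {k q : ℕ} (h : q ≤ k) :
    Ffil Y k q = Submodule.span ℤ {z | ∃ v : Fin k → H,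
      (∀ i : Fin k, (i : ℕ) < q → v i ∈ Y) ∧ z = ExteriorAlgebra.ιMulti ℤ k v} := if_pos h

private lemma mem_F1 (Y : Submodule ℤ H) {y : H} (a b : H) (hy : y ∈ Y) :
    ι ℤ y * ι ℤ a * ι ℤ b ∈ Ffil Y 3 1 := by
  rw [Ffil_eq Y (by norm_num)]
  refine Submodule.subset_span ⟨![y, a, b], fun i hi => ?_, (mul3 y a b).symm⟩
  fin_cases i
  · exact hy
  · simp at hi
  · simp at hi

end Aux

set_option maxHeartbeats 1000000 in
/-- In the symplectic setting, both quotient groups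
`Ā(δ) = (F₂L + H̃)/(((δ−1)(L) + H̃) ∩ (F₂L + H̃))` and
`B̄(δ) = (F₂L + H̃)/((δ−1)(F₁L) + F₃L + H̃)` are finite, where `L = ⋀³H` and `H̃` is the
image of `h ↦ ω ∧ h`. -/
theorem ceresa_stmt13 (g : ℕ) (hg : 2 ≤ g)
    {H : Type} [AddCommGroup H] [Module ℤ H]
    (B : H →ₗ[ℤ] H →ₗ[ℤ] ℤ) (halt : ∀ x : H, B x x = 0)
    (e : Module.Basis (Fin g ⊕ Fin g) ℤ H)
    (he1 : ∀ i j, B (e (Sum.inl i)) (e (Sum.inl j)) = 0)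
    (he2 : ∀ i j, B (e (Sum.inr i)) (e (Sum.inr j)) = 0)
    (he3 : ∀ i j, B (e (Sum.inl i)) (e (Sum.inr j)) = if i = j then 1 else 0)
    (δ : H →ₗ[ℤ] H) (hδ2 : (δ - LinearMap.id) ∘ₗ (δ - LinearMap.id) = 0)
    (hδB : ∀ x y : H, B (δ x) (δ y) = B x y)
    (Y : Submodule ℤ H)
    (hY : ∀ x : H, x ∈ Y ↔ ∃ n : ℤ, n ≠ 0 ∧ n • x ∈ LinearMap.range (δ - LinearMap.id)) :
    Finite (↥(Ffil Y 3 2 ⊔ Htil ⇑e) ⧸ Submodule.comap (Ffil Y 3 2 ⊔ Htil ⇑e).subtype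
      ((Submodule.map (Dmap δ) (⋀[ℤ]^3 H) ⊔ Htil ⇑e) ⊓ (Ffil Y 3 2 ⊔ Htil ⇑e))) ∧
    Finite (↥(Ffil Y 3 2 ⊔ Htil ⇑e) ⧸ Submodule.comap (Ffil Y 3 2 ⊔ Htil ⇑e).subtype
      (Submodule.map (Dmap δ) (Ffil Y 3 1) ⊔ Ffil Y 3 3 ⊔ Htil ⇑e)) := by
  classical
  set M : Submodule ℤ (ExteriorAlgebra ℤ H) := Ffil Y 3 2 ⊔ Htil ⇑e with hM
  -- H is torsion-free
  have hfree : ∀ (n : ℤ) (w : H), n ≠ 0 → n • w = 0 → w = 0 := by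
    intro n w hn hw
    simp only [← Int.cast_smul_eq_zsmul ℤ, Int.cast_id] at hw
    have h1 := congrArg e.repr hw
    rw [LinearEquiv.map_smul, map_zero, smul_eq_zero] at h1
    rcases h1 with h1 | h1
    · exact absurd h1 hn
    · simpa using congrArg e.repr.symm h1
  -- δ fixes Y pointwise
  have hsq : ∀ x : H, δ (δ x - x) - (δ x - x) = 0 := by
    intro x
    have := LinearMap.ext_iff.mp hδ2 x
    simpa [LinearMap.sub_apply, map_sub] using this
  have hfix : ∀ y ∈ Y, δ y = y := by
    intro y hy
    obtain ⟨n, hn, x, hx⟩ := (hY y).1 hy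
    have hx' : δ x - x = n • y := by simpa [LinearMap.sub_apply] using hx
    have h0 : δ (n • y) - n • y = 0 := hx' ▸ hsq x
    simp only [← Int.cast_smul_eq_zsmul ℤ, Int.cast_id] at h0
    rw [LinearMap.map_smul, ← smul_sub] at h0
    have := hfree n (δ y - y) hn (by simpa [← Int.cast_smul_eq_zsmul ℤ, Int.cast_id] using h0)
    exact sub_eq_zero.mp this
  have hdfix : ∀ h : H, δ (δ h - h) = δ h - h := fun h => sub_eq_zero.mp (hsq h)
  have hdY : ∀ h : H, δ h - h ∈ Y := fun h => (hY _).2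
    ⟨1, one_ne_zero, ⟨h, by simp [LinearMap.sub_apply, one_zsmul]⟩⟩
  -- the key torsion statement for generators of F₂
  have key : ∀ v : Fin 3 → H, v 0 ∈ Y → v 1 ∈ Y →
      ∃ n : ℤ, n ≠ 0 ∧
        n • (ιMulti ℤ 3 v : ExteriorAlgebra ℤ H) ∈ Submodule.map (Dmap δ) (Ffil Y 3 1) ∧
        n • (ιMulti ℤ 3 v : ExteriorAlgebra ℤ H) ∈ Submodule.map (Dmap δ) (⋀[ℤ]^3 H) := by
    intro v h0 h1
    obtain ⟨n₁, hn₁, x₁, hx₁⟩ := (hY (v 0)).1 h0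
    obtain ⟨n₂, hn₂, x₂, hx₂⟩ := (hY (v 1)).1 h1
    have hx₁' : δ x₁ = x₁ + n₁ • v 0 := by
      have h : δ x₁ - x₁ = n₁ • v 0 := by simpa [LinearMap.sub_apply] using hx₁
      rw [← h]; abel
    have hx₂' : δ x₂ = x₂ + n₂ • v 1 := by
      have h : δ x₂ - x₂ = n₂ • v 1 := by simpa [LinearMap.sub_apply] using hx₂
      rw [← h]; abel
    set d : H := δ (v 2) - v 2 with hd
    have hids := key_identity δ (v 0) (v 1) (v 2) d x₁ x₂ n₁ n₂ (hfix _ h0) (hfix _ h1)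
      (hdfix (v 2)) hx₁' hx₂' (by rw [hd]; abel)
    have hm1 : ι ℤ (v 0) * ι ℤ x₂ * ι ℤ (v 2) ∈ Ffil Y 3 1 := mem_F1 Y x₂ (v 2) h0
    have hm2 : ι ℤ x₁ * ι ℤ (v 1) * ι ℤ (v 2) ∈ Ffil Y 3 1 := by
      rw [swap12]; exact Submodule.neg_mem _ (mem_F1 Y x₁ (v 2) h1)
    have hm3 : ι ℤ x₁ * ι ℤ x₂ * ι ℤ d ∈ Ffil Y 3 1 := by
      rw [swap23, swap12]
      exact Submodule.neg_mem _ (Submodule.neg_mem _ (mem_F1 Y x₁ x₂ (hdY (v 2))))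
    have hm4 : ι ℤ x₁ * ι ℤ (v 1) * ι ℤ d ∈ Ffil Y 3 1 := by
      rw [swap12]; exact Submodule.neg_mem _ (mem_F1 Y x₁ d h1)
    refine ⟨2 * n₁ * n₂, mul_ne_zero (mul_ne_zero two_ne_zero hn₁) hn₂, ?_, ?_⟩
    · rw [mul3' v]
      simp only [← Int.cast_smul_eq_zsmul ℤ, Int.cast_id] at hids ⊢
      rw [← hids]
      refine Submodule.sub_mem _ (Submodule.sub_mem _ (Submodule.add_mem _
        (Submodule.smul_mem _ _ ?_) (Submodule.smul_mem _ _ ?_)) ?_) (Submodule.smul_mem _ _ ?_)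
      · exact Submodule.mem_map_of_mem hm1
      · exact Submodule.mem_map_of_mem hm2
      · exact Submodule.mem_map_of_mem hm3
      · exact Submodule.mem_map_of_mem hm4
    · rw [mul3' v]
      simp only [← Int.cast_smul_eq_zsmul ℤ, Int.cast_id] at hids ⊢
      rw [← hids]
      refine Submodule.sub_mem _ (Submodule.sub_mem _ (Submodule.add_mem _
        (Submodule.smul_mem _ _ ?_) (Submodule.smul_mem _ _ ?_)) ?_) (Submodule.smul_mem _ _ ?_)
      · exact Submodule.mem_map_of_mem (mem_pow3 _ _ _)
      · exact Submodule.mem_map_of_mem (mem_pow3 _ _ _)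
      · exact Submodule.mem_map_of_mem (mem_pow3 _ _ _)
      · exact Submodule.mem_map_of_mem (mem_pow3 _ _ _)
  -- reduction: M is contained in the saturation of N
  have keyM : ∀ N : Submodule ℤ (ExteriorAlgebra ℤ H), Htil ⇑e ≤ N →
      (∀ v : Fin 3 → H, v 0 ∈ Y → v 1 ∈ Y →
        (ιMulti ℤ 3 v : ExteriorAlgebra ℤ H) ∈ sat N) → M ≤ sat N := by
    intro N hH hgen
    rw [hM]
    refine sup_le ?_ (le_trans hH (le_sat N))
    rw [Ffil_eq Y (by norm_num), Submodule.span_le]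
    rintro z ⟨v, hv, rfl⟩
    exact hgen v (hv 0 (by norm_num)) (hv 1 (by norm_num))
  -- M is a finite ℤ-module
  have hMfin : Module.Finite ℤ M := by
    set S : Submodule ℤ (ExteriorAlgebra ℤ H) := Submodule.span ℤ
      (Set.range (fun r : Fin 3 → Fin g ⊕ Fin g => ιMulti ℤ 3 (fun i => e (r i)))) with hS
    have hSfin : Module.Finite ℤ S := Module.Finite.span_of_finite ℤ (Set.finite_range _)
    have htri : ∀ a b c : H, ι ℤ a * ι ℤ b * ι ℤ c ∈ S := by
      have hsp : ∀ x : H, x ∈ Submodule.span ℤ (Set.range ⇑e) := by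
        rw [e.span_eq]; exact fun x => Submodule.mem_top
      have base : ∀ j₁ j₂ j₃ : Fin g ⊕ Fin g,
          ι ℤ (e j₁) * ι ℤ (e j₂) * ι ℤ (e j₃) ∈ S := by
        intro j₁ j₂ j₃
        have hh : (ιMulti ℤ 3 (fun i => e (![j₁, j₂, j₃] i)) : ExteriorAlgebra ℤ H) ∈ S :=
          Submodule.subset_span ⟨![j₁, j₂, j₃], rfl⟩
        rw [mul3'] at hh
        simpa using hh
      intro a b c
      induction hsp a using Submodule.span_induction generalizing b c with
      | mem x hx =>
        induction hsp b using Submodule.span_induction generalizing c with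
        | mem y hy =>
          induction hsp c using Submodule.span_induction with
          | mem z hz =>
            obtain ⟨j₁, rfl⟩ := hx
            obtain ⟨j₂, rfl⟩ := hy
            obtain ⟨j₃, rfl⟩ := hz
            exact base j₁ j₂ j₃
          | zero => simp
          | add c₁ c₂ _ _ h₁ h₂ => simpa [mul_add] using S.add_mem h₁ h₂
          | smul r c₁ _ h₁ =>
            rw [LinearMap.map_smul, mul_smul_comm]
            exact S.smul_mem r h₁
        | zero => simp
        | add b₁ b₂ _ _ h₁ h₂ =>
          simpa [map_add, mul_add, add_mul] using S.add_mem (h₁ c) (h₂ c)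
        | smul r b₁ _ h₁ =>
          rw [LinearMap.map_smul, mul_smul_comm, smul_mul_assoc]
          exact S.smul_mem r (h₁ c)
      | zero => simp
      | add a₁ a₂ _ _ h₁ h₂ =>
        simpa [map_add, add_mul] using S.add_mem (h₁ b c) (h₂ b c)
      | smul r a₁ _ h₁ =>
        rw [LinearMap.map_smul, smul_mul_assoc, smul_mul_assoc]
        exact S.smul_mem r (h₁ b c)
    have h3S : ∀ v : Fin 3 → H, (ιMulti ℤ 3 v : ExteriorAlgebra ℤ H) ∈ S := by
      intro v
      rw [mul3']
      exact htri _ _ _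
    have hMS : M ≤ S := by
      rw [hM]
      refine sup_le ?_ ?_
      · rw [Ffil_eq Y (by norm_num), Submodule.span_le]
        rintro z ⟨v, hv, rfl⟩
        exact h3S v
      · rw [Htil, Submodule.span_le]
        rintro z ⟨h, rfl⟩
        rw [Finset.sum_mul]
        refine Submodule.sum_mem _ fun i _ => ?_
        have hh := h3S ![e (Sum.inl i), e (Sum.inr i), h]
        rwa [mul3] at hh
    haveI : IsNoetherian ℤ S := isNoetherian_of_fg_of_noetherian S (Module.Finite.iff_fg.mp hSfin)
    haveI : Module.Finite ℤ (Submodule.comap S.subtype M) :=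
      Module.Finite.iff_fg.mpr (IsNoetherian.noetherian _)
    exact Module.Finite.equiv (Submodule.comapSubtypeEquivOfLe hMS)
  -- finiteness of the quotient by a submodule whose saturation contains M
  have finQ : ∀ N : Submodule ℤ (ExteriorAlgebra ℤ H), M ≤ sat N →
      Finite (↥M ⧸ Submodule.comap M.subtype N) := by
    intro N hle
    haveI := hMfin
    apply Module.finite_of_fg_torsion
    intro x
    obtain ⟨⟨m, hm⟩, rfl⟩ := Submodule.Quotient.mk_surjective _ x
    obtain ⟨n, hn, hmem⟩ := hle hm
    refine ⟨⟨n, mem_nonZeroDivisors_of_ne_zero hn⟩, ?_⟩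
    have : (n • Submodule.Quotient.mk (⟨m, hm⟩ : M) :
        ↥M ⧸ Submodule.comap M.subtype N) = Submodule.Quotient.mk (n • ⟨m, hm⟩) :=
      (Submodule.Quotient.mk_smul _ _ _).symm
    rw [Submonoid.mk_smul, this, Submodule.Quotient.mk_eq_zero, Submodule.mem_comap]
    simpa [← Int.cast_smul_eq_zsmul ℤ, Int.cast_id] using hmem
  constructor
  · refine finQ _ (keyM _ (le_inf le_sup_right le_sup_right) ?_)
    intro v h0 h1
    obtain ⟨n, hn, hF1, hPow⟩ := key v h0 h1
    have hzF2 : (ιMulti ℤ 3 v : ExteriorAlgebra ℤ H) ∈ Ffil Y 3 2 := by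
      rw [Ffil_eq Y (by norm_num)]
      refine Submodule.subset_span ⟨v, fun i hi => ?_, rfl⟩
      fin_cases i
      · exact h0
      · exact h1
      · simp at hi
    refine ⟨n, hn, Submodule.mem_inf.2 ⟨Submodule.mem_sup_left hPow, ?_⟩⟩
    have : n • (ιMulti ℤ 3 v : ExteriorAlgebra ℤ H) ∈ M := by
      simp only [← Int.cast_smul_eq_zsmul ℤ, Int.cast_id]
      exact Submodule.smul_mem _ _ (Submodule.mem_sup_left hzF2)
    rwa [hM] at this
  · refine finQ _ (keyM _ le_sup_right ?_)
    intro v h0 h1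
    obtain ⟨n, hn, hF1, hPow⟩ := key v h0 h1
    exact ⟨n, hn, Submodule.mem_sup_left (Submodule.mem_sup_left hF1)⟩
end

section
/- Let H be a finitely generated free ℤ-module with a perfect alternating bilinear form ⟨·,·⟩ : H × H → ℤ, let ℓ₁,…,ℓ_N ∈ H satisfy ⟨ℓᵢ,ℓⱼ⟩ = 0 for all i,j, let c₁,…,c_N be positive integers, and let δ : H → H be the endomorphism δ(h) = h + Σ_{i=1}^N cᵢ ⟨ℓᵢ,h⟩ ℓᵢ. Then the ℚ-span of the image of δ − 1 in H ⊗ ℚ equals the ℚ-span of {ℓ₁,…,ℓ_N}; equivalently, the saturation of (δ−1)(H) in H equals the saturation of the ℤ-span Y of ℓ₁,…,ℓ_N. -/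
/-- The saturation of a submodule of a `ℤ`-module. -/
def mySat {H : Type} [AddCommGroup H] [Module ℤ H] (M : Submodule ℤ H) : Submodule ℤ H where
  carrier := {x | ∃ n : ℤ, n ≠ 0 ∧ n • x ∈ M}
  zero_mem' := ⟨1, one_ne_zero, by simp⟩
  add_mem' := by
    rintro a b ⟨m, hm, hma⟩ ⟨n, hn, hnb⟩
    refine ⟨m * n, mul_ne_zero hm hn, ?_⟩
    rw [zsmul_add]
    exact Submodule.add_mem _ (by rw [mul_comm, mul_smul]; exact zsmul_mem hma _)
      (by rw [mul_smul]; exact zsmul_mem hnb _)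
  smul_mem' := by
    rintro k x ⟨n, hn, hnx⟩
    refine ⟨n, hn, ?_⟩
    have h := map_zsmul (DistribMulAction.toAddMonoidHom H k) n x
    simp only [DistribMulAction.toAddMonoidHom_apply] at h
    rw [← h]
    exact M.smul_mem k hnx

theorem mem_mySat {H : Type} [AddCommGroup H] [Module ℤ H] {M : Submodule ℤ H} {x : H} :
    x ∈ mySat M ↔ ∃ n : ℤ, n ≠ 0 ∧ n • x ∈ M := Iff.rfl

theorem le_mySat {H : Type} [AddCommGroup H] [Module ℤ H] (M : Submodule ℤ H) : M ≤ mySat M :=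
  fun x hx => ⟨1, one_ne_zero, by simpa using hx⟩

/-- Separation: if `x` is not in the saturation of `M` in a f.g. free `ℤ`-module,
there is an integer functional killing `M` but not `x`. -/
theorem exists_functional_of_not_mem_mySat {H : Type} [AddCommGroup H] [Module ℤ H]
    [Module.Free ℤ H] [Module.Finite ℤ H] (M : Submodule ℤ H) (x : H)
    (hx : x ∉ mySat M) : ∃ f : H →ₗ[ℤ] ℤ, (∀ y ∈ M, f y = 0) ∧ f x ≠ 0 := by
  letI : Module ℤ (H ⧸ mySat M) := Submodule.Quotient.module _
  have : @NoZeroSMulDivisors ℤ (H ⧸ mySat M) _ _ SMulZeroClass.toSMul := by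
    refine @NoZeroSMulDivisors.mk _ _ _ _ SMulZeroClass.toSMul (fun {n q} hq => ?_)
    by_cases hn : n = 0
    · exact Or.inl hn
    · right
      obtain ⟨y, rfl⟩ := Submodule.Quotient.mk_surjective (mySat M) q
      rw [← Submodule.Quotient.mk_smul, Submodule.Quotient.mk_eq_zero] at hq
      obtain ⟨m, hm, hmy⟩ := hq
      rw [Submodule.Quotient.mk_eq_zero]
      refine ⟨m * n, mul_ne_zero hm hn, ?_⟩
      rw [mul_smul, ← int_smul_eq_zsmul ‹Module ℤ H› n]
      exact hmy
  have : Module.Finite ℤ (H ⧸ mySat M) :=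
    Module.Finite.of_surjective (mySat M).mkQ (Submodule.mkQ_surjective _)
  have : Module.Free ℤ (H ⧸ mySat M) := Module.free_of_finite_type_torsion_free'
  set b := Module.Free.chooseBasis ℤ (H ⧸ mySat M)
  have hq : Submodule.Quotient.mk (p := mySat M) x ≠ 0 := by
    rwa [Ne, Submodule.Quotient.mk_eq_zero]
  have hrepr : b.repr (Submodule.Quotient.mk x) ≠ 0 := fun habs =>
    hq (by simpa [habs] using (b.repr.symm_apply_apply (Submodule.Quotient.mk x)).symm)
  obtain ⟨i, hi⟩ := Finsupp.ne_iff.1 hrepr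
  refine ⟨(b.coord i).comp (mySat M).mkQ, fun y hy => ?_, ?_⟩
  · have h0 : (mySat M).mkQ y = 0 := (Submodule.Quotient.mk_eq_zero _).2 (le_mySat M hy)
    simp [h0]
  · simpa [Module.Basis.coord] using hi

/-- Let `H` be a finitely generated free `ℤ`-module with a perfect alternating bilinear form
`⟨·,·⟩`, let `ℓ₁,…,ℓ_N ∈ H` satisfy `⟨ℓᵢ,ℓⱼ⟩ = 0`, let `c₁,…,c_N` be positive integers, and
let `δ(h) = h + Σᵢ cᵢ⟨ℓᵢ,h⟩ℓᵢ`. Then the saturation of `(δ−1)(H)` in `H` equals the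
saturation of the `ℤ`-span of `ℓ₁,…,ℓ_N`. -/
theorem ceresa_stmt19 {H : Type} [AddCommGroup H] [Module ℤ H]
    [Module.Free ℤ H] [Module.Finite ℤ H]
    (B : H →ₗ[ℤ] H →ₗ[ℤ] ℤ) (halt : ∀ x : H, B x x = 0)
    (hperf : Function.Bijective ⇑B)
    (N : ℕ) (ℓ : Fin N → H) (hℓ : ∀ i j, B (ℓ i) (ℓ j) = 0)
    (c : Fin N → ℕ) (hc : ∀ i, 0 < c i)
    (δ : H →ₗ[ℤ] H)
    (hδ : ∀ h : H, δ h = h + ∑ i, ((c i : ℤ) * B (ℓ i) h) • ℓ i) :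
    ∀ h : H, (∃ n : ℤ, n ≠ 0 ∧ n • h ∈ LinearMap.range (δ - LinearMap.id)) ↔
      (∃ n : ℤ, n ≠ 0 ∧ n • h ∈ Submodule.span ℤ (Set.range ℓ)) := by
  set T : H →ₗ[ℤ] H := δ - LinearMap.id with hTdef
  have hTx : ∀ x, T x = ∑ i, ((c i : ℤ) * B (ℓ i) x) • ℓ i := by
    intro x
    have h1 : T x = δ x - x := by simp [hTdef]
    rw [h1, hδ x]; abel
  -- key positivity argument: any functional killing the range of T kills each ℓ i
  have key : ∀ f : H →ₗ[ℤ] ℤ, (∀ x, f (T x) = 0) → ∀ i, f (ℓ i) = 0 := by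
    intro f hf
    have hv : (∑ i, (((c i : ℤ) * f (ℓ i)) • ℓ i : H)) = 0 := by
      apply hperf.injective
      rw [map_zero, map_sum]
      ext x
      have h2 := hf x
      rw [hTx, map_sum] at h2
      simp only [← int_smul_eq_zsmul ‹Module ℤ H›, SMul.smul_eq_hSMul, Int.cast_id] at h2 ⊢
      simp only [map_smul, smul_eq_mul, LinearMap.sum_apply, LinearMap.smul_apply,
        LinearMap.zero_apply] at h2 ⊢
      rw [← h2]
      apply Finset.sum_congr rfl
      intro j _
      ring
    have hsum : (∑ i, (c i : ℤ) * (f (ℓ i) * f (ℓ i))) = 0 := by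
      have h3 := congrArg f hv
      rw [map_sum, map_zero] at h3
      simp only [← int_smul_eq_zsmul ‹Module ℤ H›, SMul.smul_eq_hSMul, Int.cast_id] at h3
      simp only [map_smul, smul_eq_mul] at h3
      rw [← h3]
      apply Finset.sum_congr rfl
      intro j _
      ring
    intro i
    have hterm := (Finset.sum_eq_zero_iff_of_nonneg (fun j _ =>
      mul_nonneg (by positivity) (mul_self_nonneg _))).1 hsum i (Finset.mem_univ i)
    have hci : (c i : ℤ) ≠ 0 := by exact_mod_cast (hc i).ne'
    rcases mul_eq_zero.1 hterm with h1 | h2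
    · exact absurd h1 hci
    · exact mul_self_eq_zero.1 h2
  intro h
  constructor
  · rintro ⟨n, hn, x, hx⟩
    refine ⟨n, hn, ?_⟩
    rw [← hx]
    show T x ∈ _
    rw [hTx]
    refine Submodule.sum_mem _ fun i _ => ?_
    simp only [← int_smul_eq_zsmul ‹Module ℤ H›, SMul.smul_eq_hSMul, Int.cast_id]
    exact Submodule.smul_mem _ _ (Submodule.subset_span ⟨i, rfl⟩)
  · rintro ⟨n, hn, hmem⟩
    have hl : ∀ i, ℓ i ∈ mySat (LinearMap.range T) := by
      intro i
      by_contra hni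
      obtain ⟨f, hf0, hfx⟩ := exists_functional_of_not_mem_mySat _ _ hni
      exact hfx (key f (fun x => hf0 _ ⟨x, rfl⟩) i)
    have hspan : Submodule.span ℤ (Set.range ℓ) ≤ mySat (LinearMap.range T) :=
      Submodule.span_le.2 (by rintro _ ⟨i, rfl⟩; exact hl i)
    obtain ⟨m, hm, hmn⟩ := hspan hmem
    refine ⟨m * n, mul_ne_zero hm hn, ?_⟩
    rwa [mul_smul]
end
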